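/- Kesten-type bound: let X₁, X₂, … be conditionally independent random variables (given a σ-algebra G) with common subexponential distribution F satisfying Assumption D3. Then for every ε > 0 there exist constants V(ε) > 0 and x₀ = x₀(ε) such that for all x > x₀ and all n ≥ 1, P(∑_{k=1}^n X_k > x) ≤ V(ε)(1+ε)^n F̄(x). -/

import Mathlib

open MeasureTheory ProbabilityTheory Filter Topology Set

/-- The (right) tail function of a measure on `ℝ`. -/
noncomputable def tail (μ : MeasureTheory.Measure ℝ) (x : ℝ) : ℝ := (μ (Set.Ioi x)).toReal

/-- A distribution is long-tailed if `F̄(x+y) ~ F̄(x)` for every `y`. -/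
def LongTailed (μ : MeasureTheory.Measure ℝ) : Prop :=
  (∀ x : ℝ, 0 < μ (Set.Ioi x)) ∧
  ∀ y : ℝ, Filter.Tendsto (fun x => tail μ (x + y) / tail μ x) Filter.atTop (nhds 1)

/-- A distribution supported on `[0,∞)` is subexponential if `F̄^{*2}(x) ~ 2 F̄(x)`. -/
def Subexponential (μ : MeasureTheory.Measure ℝ) : Prop :=
  (∀ x : ℝ, 0 < μ (Set.Ioi x)) ∧ μ (Set.Iio 0) = 0 ∧
  Filter.Tendsto (fun x => tail (μ.conv μ) x / tail μ x) Filter.atTop (nhds 2)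

/-- Membership in the class `H(F)` of insensitivity functions of a long-tailed `F`. -/
structure MemH (μ : MeasureTheory.Measure ℝ) (h : ℝ → ℝ) : Prop where
  nonneg : ∀ x, 0 ≤ x → 0 ≤ h x
  mono : MonotoneOn h (Set.Ici 0)
  tendsto_atTop : Filter.Tendsto h Filter.atTop Filter.atTop
  ratio_anti : AntitoneOn (fun x => h x / x) (Set.Ioi 0)
  ratio_zero : Filter.Tendsto (fun x => h x / x) Filter.atTop (nhds 0)
  tail_insensitive :
    Filter.Tendsto (fun x => tail μ (x - h x) / tail μ x) Filter.atTop (nhds 1)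

/-- Assumption D3 of Foss–Richards (2010) with insensitivity function `h ∈ H(F)`:
there are a nondecreasing `r` and events `Bᵢ(x) ∈ G` increasing to `Ω` with
`P(Xᵢ > x | G) 1(Bᵢ(x)) ≤ r(x) F̄(x) 1(Bᵢ(x))` a.s., `P(Bᵢ(h(x))ᶜ) = o(F̄(x))`
uniformly in `i`, `r(x) F̄(h(x)) = o(1)` and
`r(x) ∫_{h(x)}^{x-h(x)} F̄(x-y) F(dy) = o(F̄(x))`. -/
def AssumptionD3 {Ω : Type*} [MeasurableSpace Ω] (P : MeasureTheory.Measure Ω)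
    (G : MeasurableSpace Ω) {ι : Type*} (X : ι → Ω → ℝ)
    (μ : MeasureTheory.Measure ℝ) (h : ℝ → ℝ) : Prop :=
  ∃ (r : ℝ → ℝ) (B : ι → ℝ → Set Ω),
    Monotone r ∧
    (∀ i x, MeasurableSet[G] (B i x)) ∧
    (∀ i, Monotone (B i)) ∧
    (∀ i, (⋃ x : ℝ, B i x) = Set.univ) ∧
    (∀ i x, ∀ᵐ ω ∂P, ω ∈ B i x →
      (P[Set.indicator {ω' | x < X i ω'} (fun _ => (1 : ℝ)) | G]) ω ≤ r x * tail μ x) ∧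
    (∀ ε : ℝ, 0 < ε → ∀ᶠ x in Filter.atTop, ∀ i,
      (P ((B i (h x))ᶜ)).toReal ≤ ε * tail μ x) ∧
    Filter.Tendsto (fun x => r x * tail μ (h x)) Filter.atTop (nhds 0) ∧
    Filter.Tendsto (fun x =>
        (r x * ∫ y in Set.Ioc (h x) (x - h x), tail μ (x - y) ∂μ) / tail μ x)
      Filter.atTop (nhds 0)

section AuxLemmas

variable {μ : Measure ℝ} [IsProbabilityMeasure μ]

lemma tail_nonneg (x : ℝ) : 0 ≤ tail μ x := ENNReal.toReal_nonneg

omit [IsProbabilityMeasure μ] in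
lemma tail_anti [IsFiniteMeasure μ] : Antitone (tail μ) := fun _ _ hab =>
  ENNReal.toReal_mono (measure_ne_top μ _) (measure_mono (Set.Ioi_subset_Ioi hab))

lemma tail_measurable : Measurable (tail μ) := tail_anti.measurable

lemma tail_sub_tail {a b : ℝ} (hab : a ≤ b) :
    tail μ a - tail μ b = (μ (Set.Ioc a b)).toReal := by
  have h : μ (Set.Ioi a) = μ (Set.Ioc a b) + μ (Set.Ioi b) := by
    rw [← measure_union Set.Ioc_disjoint_Ioi_same measurableSet_Ioi,
      Set.Ioc_union_Ioi_eq_Ioi hab]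
  have := ENNReal.toReal_add (measure_ne_top μ (Set.Ioc a b)) (measure_ne_top μ (Set.Ioi b))
  rw [tail, tail, h, this]; ring

/-- Abel-type summation bound (strengthened form proved by induction). -/
lemma abel_bound (a f N : ℕ → ℝ) (A : ℝ)
    (ha0 : 0 ≤ a 0) (hamono : Monotone a) (hN0 : ∀ j, 0 ≤ N j) (hNf : ∀ j, N j ≤ A * f j) :
    ∀ m, ∑ j ∈ Finset.range m, a j * (N j - N (j + 1)) ≤
      A * (∑ j ∈ Finset.range m, a j * (f j - f (j + 1))) + A * (a m * f m) - a m * N m := by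
  intro m
  induction m with
  | zero =>
    simp only [Finset.range_zero, Finset.sum_empty]
    nlinarith [hNf 0, ha0, hN0 0]
  | succ m ih =>
    rw [Finset.sum_range_succ, Finset.sum_range_succ]
    have ham : a m ≤ a (m + 1) := hamono (Nat.le_succ m)
    have h1 : 0 ≤ a m := le_trans ha0 (hamono (Nat.zero_le m))
    nlinarith [hNf (m + 1), hN0 (m + 1), ih]

/-- Abel-type summation bound. -/
lemma abel_bound' (a f N : ℕ → ℝ) (A : ℝ)
    (ha0 : 0 ≤ a 0) (hamono : Monotone a) (hN0 : ∀ j, 0 ≤ N j) (hNf : ∀ j, N j ≤ A * f j)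
    (m : ℕ) : ∑ j ∈ Finset.range m, a j * (N j - N (j + 1)) ≤
      A * (∑ j ∈ Finset.range m, a j * (f j - f (j + 1))) + A * (a m * f m) := by
  have := abel_bound a f N A ha0 hamono hN0 hNf m
  have h1 : 0 ≤ a m := le_trans ha0 (hamono (Nat.zero_le m))
  nlinarith [hN0 m]

/-- Find an interval of a grid containing a value. -/
lemma exists_grid (s : ℕ → ℝ) (v : ℝ) :
    ∀ m, s 0 < v → v ≤ s m → ∃ j < m, s j < v ∧ v ≤ s (j + 1) := by
  intro m
  induction m with
  | zero => intro h1 h2; linarith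
  | succ m ih =>
    intro h1 h2
    by_cases hc : v ≤ s m
    · obtain ⟨j, hj, hj2⟩ := ih h1 hc
      exact ⟨j, Nat.lt_succ_of_lt hj, hj2⟩
    · exact ⟨m, Nat.lt_succ_self m, not_le.1 hc, h2⟩

/-- Sum of integrals over consecutive Ioc intervals. -/
lemma sum_setIntegral_Ioc (μ : Measure ℝ) [IsProbabilityMeasure μ] (g : ℝ → ℝ)
    (hg : Integrable g μ) (s : ℕ → ℝ) (hs : Monotone s) :
    ∀ m, ∑ j ∈ Finset.range m, ∫ y in Set.Ioc (s j) (s (j + 1)), g y ∂μ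
      = ∫ y in Set.Ioc (s 0) (s m), g y ∂μ := by
  intro m
  induction m with
  | zero => simp
  | succ m ih =>
    rw [Finset.sum_range_succ, ih,
      ← MeasureTheory.setIntegral_union (Set.Ioc_disjoint_Ioc_of_le le_rfl) measurableSet_Ioc
        (hg.integrableOn) (hg.integrableOn),
      Set.Ioc_union_Ioc_eq_Ioc (hs (Nat.zero_le m)) (hs (Nat.le_succ m))]

lemma setIntegral_condexp_indicator {Ω : Type*} {G mΩ : MeasurableSpace Ω}
    (hG : G ≤ mΩ) (P : Measure Ω) [IsProbabilityMeasure P]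
    {s B : Set Ω} (hs : MeasurableSet[mΩ] s) (hB : MeasurableSet[G] B) :
    ∫ ω in B, (P[Set.indicator s (fun _ => (1 : ℝ)) | G]) ω ∂P = (P (s ∩ B)).toReal := by
  rw [setIntegral_condExp hG ((integrable_const (1 : ℝ)).indicator hs) hB,
    integral_indicator hs, Measure.restrict_restrict hs, setIntegral_const]
  simp [Measure.real]

/-- Key conditional-independence bound. -/
lemma key_cond {Ω : Type*} {G : MeasurableSpace Ω} [mΩ : MeasurableSpace Ω]
    [StandardBorelSpace Ω] (hG : G ≤ mΩ) (P : Measure Ω) [IsProbabilityMeasure P]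
    {f g : Ω → ℝ} (hf : Measurable f) (hg : Measurable g)
    (hind : ProbabilityTheory.CondIndepFun G hG f g P)
    {I : Set ℝ} (hI : MeasurableSet I) (c K : ℝ) (hK : 0 ≤ K)
    {B : Set Ω} (hB : MeasurableSet[G] B)
    (hbd : ∀ᵐ ω ∂P, ω ∈ B →
      (P[Set.indicator (g ⁻¹' Set.Ioi c) (fun _ => (1 : ℝ)) | G]) ω ≤ K) :
    (P (f ⁻¹' I ∩ g ⁻¹' Set.Ioi c ∩ B)).toReal ≤ K * (P (f ⁻¹' I)).toReal := by
  have hB' : MeasurableSet[mΩ] B := hG _ hB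
  have hA : MeasurableSet (f ⁻¹' I) := hf hI
  have hC : MeasurableSet (g ⁻¹' Set.Ioi c) := hg measurableSet_Ioi
  have hind_nonneg : ∀ (s : Set Ω),
      0 ≤ᵐ[P] P[Set.indicator s (fun _ => (1 : ℝ)) | G] := fun s =>
    condExp_nonneg (Filter.Eventually.of_forall fun ω =>
      Set.indicator_nonneg (fun _ _ => zero_le_one) ω)
  have hv0 := hind_nonneg (f ⁻¹' I)
  have hprod := (ProbabilityTheory.condIndepFun_iff_condExp_inter_preimage_eq_mul
    (μ := P) hf hg).mp hind I (Set.Ioi c) hI measurableSet_Ioi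
  have hvw_meas : AEStronglyMeasurable
      (fun ω => (P[Set.indicator (f ⁻¹' I) (fun _ => (1 : ℝ)) | G]) ω *
        (P[Set.indicator (g ⁻¹' Set.Ioi c) (fun _ => (1 : ℝ)) | G]) ω) P :=
    ((stronglyMeasurable_condExp.mul stronglyMeasurable_condExp).mono hG).aestronglyMeasurable
  have hw01 : ∀ᵐ ω ∂P, 0 ≤ (P[Set.indicator (g ⁻¹' Set.Ioi c) (fun _ => (1 : ℝ)) | G]) ω ∧
      (P[Set.indicator (g ⁻¹' Set.Ioi c) (fun _ => (1 : ℝ)) | G]) ω ≤ 1 := by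
    have h1 : P[Set.indicator (g ⁻¹' Set.Ioi c) (fun _ => (1 : ℝ)) | G]
        ≤ᵐ[P] P[(fun _ => (1 : ℝ)) | G] :=
      condExp_mono ((integrable_const (1 : ℝ)).indicator hC) (integrable_const 1)
        (Filter.Eventually.of_forall fun ω =>
          Set.indicator_le_self' (fun _ _ => zero_le_one) ω)
    have hc1 : P[(fun _ => (1 : ℝ)) | G] = fun _ => (1 : ℝ) := condExp_const (μ := P) hG (1 : ℝ)
    rw [hc1] at h1
    filter_upwards [hind_nonneg (g ⁻¹' Set.Ioi c), h1] with ω h0ω h1ω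
    exact ⟨h0ω, h1ω⟩
  have hvw_int : Integrable (fun ω => (P[Set.indicator (f ⁻¹' I) (fun _ => (1 : ℝ)) | G]) ω *
      (P[Set.indicator (g ⁻¹' Set.Ioi c) (fun _ => (1 : ℝ)) | G]) ω) P := by
    refine Integrable.mono'
      (g := fun ω => |(P[Set.indicator (f ⁻¹' I) (fun _ => (1 : ℝ)) | G]) ω|)
      integrable_condExp.abs hvw_meas ?_
    filter_upwards [hv0, hw01] with ω h0 h1
    rw [Real.norm_eq_abs, abs_mul]
    have hle : |(P[Set.indicator (g ⁻¹' Set.Ioi c) (fun _ => (1 : ℝ)) | G]) ω| ≤ 1 := by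
      rw [abs_le]; exact ⟨by linarith [h1.1], h1.2⟩
    nlinarith [abs_nonneg ((P[Set.indicator (f ⁻¹' I) (fun _ => (1 : ℝ)) | G]) ω)]
  calc (P (f ⁻¹' I ∩ g ⁻¹' Set.Ioi c ∩ B)).toReal
      = ∫ ω in B, (P[Set.indicator (f ⁻¹' I ∩ g ⁻¹' Set.Ioi c) (fun _ => (1 : ℝ)) | G]) ω ∂P :=
        (setIntegral_condexp_indicator hG P (hA.inter hC) hB).symm
    _ = ∫ ω in B, (P[Set.indicator (f ⁻¹' I) (fun _ => (1 : ℝ)) | G]) ω *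
          (P[Set.indicator (g ⁻¹' Set.Ioi c) (fun _ => (1 : ℝ)) | G]) ω ∂P :=
        setIntegral_congr_ae hB' (hprod.mono fun ω hω _ => hω)
    _ ≤ ∫ ω in B, K * (P[Set.indicator (f ⁻¹' I) (fun _ => (1 : ℝ)) | G]) ω ∂P := by
        refine setIntegral_mono_ae_restrict hvw_int.integrableOn
          (integrable_condExp.const_mul K).integrableOn ?_
        rw [EventuallyLE, ae_restrict_iff' hB']
        filter_upwards [hv0, hbd] with ω h0 hbdω
        intro hωB
        calc _ * _ ≤ _ * K := mul_le_mul_of_nonneg_left (hbdω hωB) h0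
          _ = K * _ := mul_comm _ _
    _ ≤ K * (P (f ⁻¹' I)).toReal := by
        rw [integral_const_mul]
        refine mul_le_mul_of_nonneg_left ?_ hK
        calc ∫ ω in B, (P[Set.indicator (f ⁻¹' I) (fun _ => (1 : ℝ)) | G]) ω ∂P
            ≤ ∫ ω, (P[Set.indicator (f ⁻¹' I) (fun _ => (1 : ℝ)) | G]) ω ∂P :=
              setIntegral_le_integral integrable_condExp hv0
          _ = ∫ ω, Set.indicator (f ⁻¹' I) (fun _ => (1 : ℝ)) ω ∂P := integral_condExp hG
          _ = (P (f ⁻¹' I)).toReal := by rw [integral_indicator hA]; simp [Measure.real]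

end AuxLemmas

set_option maxHeartbeats 2000000 in
/-- Kesten-type bound for conditionally independent random variables with common
subexponential distribution satisfying Assumption D3. -/
theorem kesten_bound
    {Ω : Type*} (G : MeasurableSpace Ω) [mΩ : MeasurableSpace Ω] [StandardBorelSpace Ω]
    (P : MeasureTheory.Measure Ω) [MeasureTheory.IsProbabilityMeasure P]
    (hG : G ≤ mΩ)
    (μ : MeasureTheory.Measure ℝ) [MeasureTheory.IsProbabilityMeasure μ]
    (hS : Subexponential μ)
    (X : ℕ → Ω → ℝ) (hXmeas : ∀ k, Measurable (X k))
    (hD1 : ProbabilityTheory.iCondIndepFun (mΩ := mΩ) G hG X P)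
    (hdist : ∀ k, MeasureTheory.Measure.map (X k) P = μ)
    (h : ℝ → ℝ) (hmemH : MemH μ h) (hD3 : AssumptionD3 P G X μ h) :
    ∀ ε : ℝ, 0 < ε → ∃ V : ℝ, 0 < V ∧ ∃ x₀ : ℝ, ∀ x > x₀, ∀ n : ℕ, 1 ≤ n →
      (P {ω | x < ∑ k ∈ Finset.range n, X k ω}).toReal
        ≤ V * (1 + ε) ^ n * tail μ x := by
  intro ε hε
  obtain ⟨hpos, -, -⟩ := hS
  obtain ⟨r₀, B, hrmono₀, hBmeas, hBmono, hBunion, hbound₀, hBsmall, hrF₀, hrJ₀⟩ := hD3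
  have Tpos : ∀ x : ℝ, 0 < tail μ x := fun x =>
    ENNReal.toReal_pos (hpos x).ne' (measure_ne_top μ _)
  have Tanti : Antitone (tail μ) := tail_anti
  have Tnn : ∀ x : ℝ, 0 ≤ tail μ x := tail_nonneg
  -- replace r by its nonnegative part
  set r : ℝ → ℝ := fun x => max (r₀ x) 0 with hr_def
  have hrmono : Monotone r := fun a b hab => max_le_max (hrmono₀ hab) le_rfl
  have hrnn : ∀ x, 0 ≤ r x := fun x => le_max_right _ _
  have hbound : ∀ i x, ∀ᵐ ω ∂P, ω ∈ B i x →
      (P[Set.indicator {ω' | x < X i ω'} (fun _ => (1 : ℝ)) | G]) ω ≤ r x * tail μ x := by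
    intro i x
    filter_upwards [hbound₀ i x] with ω hω hmem
    exact le_trans (hω hmem) (mul_le_mul_of_nonneg_right (le_max_left _ _) (Tnn x))
  set ε' : ℝ := min (ε / 8) 1 with hε'_def
  have hε'pos : 0 < ε' := lt_min (by linarith) one_pos
  have hε'le1 : ε' ≤ 1 := min_le_right _ _
  have h5ε' : 5 * ε' ≤ ε := by
    rcases le_total (ε / 8) 1 with hc | hc
    · rw [hε'_def, min_eq_left hc]; linarith
    · rw [hε'_def, min_eq_right hc]; linarith
  -- a uniform "one-step" insensitivity bound
  have hshift_ev : ∀ᶠ z in atTop, tail μ (z - 1) ≤ 2 * tail μ z := by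
    have h1 := hmemH.tail_insensitive.eventually_lt_const (show (1 : ℝ) < 2 by norm_num)
    have h2 := hmemH.tendsto_atTop.eventually_ge_atTop 1
    filter_upwards [h1, h2] with z hz1 hz2
    have hz : tail μ (z - h z) ≤ 2 * tail μ z := by
      rw [div_lt_iff₀ (Tpos z)] at hz1; linarith
    exact le_trans (Tanti (by linarith : z - h z ≤ z - 1)) hz
  obtain ⟨z₁, hz₁⟩ := eventually_atTop.mp hshift_ev
  -- the main collection of eventual conditions
  have hx_ev : ∀ᶠ x in atTop,
      (tail μ (x - h x) ≤ (1 + ε') * tail μ x) ∧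
      (∀ i, (P ((B i (h x))ᶜ)).toReal ≤ ε' * tail μ x) ∧
      (r x * tail μ (h x) ≤ ε') ∧
      (r x * (∫ y in Set.Ioc (h x) (x - h x), tail μ (x - y) ∂μ) ≤ ε' * tail μ x) ∧
      (1 ≤ h x) ∧ (h x ≤ x - h x) ∧ (z₁ ≤ h x) := by
    have c1 : ∀ᶠ x in atTop, tail μ (x - h x) ≤ (1 + ε') * tail μ x := by
      filter_upwards [hmemH.tail_insensitive.eventually_lt_const
        (show (1 : ℝ) < 1 + ε' by linarith)] with x hx
      rw [div_lt_iff₀ (Tpos x)] at hx; linarith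
    have c2 := hBsmall ε' hε'pos
    have c3 : ∀ᶠ x in atTop, r x * tail μ (h x) ≤ ε' := by
      have : ∀ᶠ x in atTop, r₀ x * tail μ (h x) < ε' := hrF₀.eventually_lt_const hε'pos
      filter_upwards [this] with x hx
      have hrx : r x = max (r₀ x) 0 := rfl
      rw [hrx, max_mul_of_nonneg _ _ (Tnn (h x))]
      simp only [zero_mul]
      exact max_le (le_of_lt hx) (le_of_lt hε'pos)
    have c4 : ∀ᶠ x in atTop,
        r x * (∫ y in Set.Ioc (h x) (x - h x), tail μ (x - y) ∂μ) ≤ ε' * tail μ x := by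
      have hJnn : ∀ x : ℝ, 0 ≤ ∫ y in Set.Ioc (h x) (x - h x), tail μ (x - y) ∂μ := fun x =>
        setIntegral_nonneg measurableSet_Ioc fun y _ => Tnn _
      have : ∀ᶠ x in atTop,
          (r₀ x * ∫ y in Set.Ioc (h x) (x - h x), tail μ (x - y) ∂μ) / tail μ x < ε' :=
        hrJ₀.eventually_lt_const hε'pos
      filter_upwards [this] with x hx
      rw [div_lt_iff₀ (Tpos x)] at hx
      have hrx : r x = max (r₀ x) 0 := rfl
      rw [hrx, max_mul_of_nonneg _ _ (hJnn x)]
      simp only [zero_mul]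
      exact max_le (le_of_lt hx) (mul_nonneg (le_of_lt hε'pos) (Tnn x))
    have c5 : ∀ᶠ x in atTop, 1 ≤ h x := hmemH.tendsto_atTop.eventually_ge_atTop 1
    have c6 : ∀ᶠ x in atTop, h x ≤ x - h x := by
      have h1 : ∀ᶠ x in atTop, h x / x < 1 / 2 :=
        hmemH.ratio_zero.eventually_lt_const (by norm_num)
      have h2 : ∀ᶠ x : ℝ in atTop, 0 < x := eventually_gt_atTop 0
      filter_upwards [h1, h2] with x hx1 hx2
      rw [div_lt_iff₀ hx2] at hx1; linarith
    have c7 : ∀ᶠ x in atTop, z₁ ≤ h x := hmemH.tendsto_atTop.eventually_ge_atTop z₁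
    filter_upwards [c1, c2, c3, c4, c5, c6, c7] with x h1 h2 h3 h4 h5 h6 h7
    exact ⟨h1, h2, h3, h4, h5, h6, h7⟩
  obtain ⟨x₁, hx₁⟩ := eventually_atTop.mp hx_ev
  set x₀ : ℝ := max x₁ 0 with hx₀_def
  set c₀ : ℝ := 1 / tail μ x₀ with hc₀_def
  have hc₀pos : 0 < c₀ := div_pos one_pos (Tpos x₀)
  set D : ℝ := c₀ + 3 with hD_def
  -- the recursive constants
  set A : ℕ → ℝ := fun n => Nat.rec c₀ (fun _ a => (1 + ε) * a + D) n with hA_def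
  have hA0 : A 0 = c₀ := rfl
  have hAsucc : ∀ n, A (n + 1) = (1 + ε) * A n + D := fun n => rfl
  have hApos : ∀ n, 0 < A n := by
    intro n
    induction n with
    | zero => exact hc₀pos
    | succ n ih =>
      rw [hAsucc]
      have hD3' : 3 ≤ D := by rw [hD_def]; linarith
      nlinarith
  -- the trivial bound below x₀
  have trivial_bound : ∀ (s : Set Ω) (z : ℝ), z ≤ x₀ → (P s).toReal ≤ c₀ * tail μ z := by
    intro s z hz
    have h1 : (P s).toReal ≤ 1 := by
      have : P s ≤ 1 := prob_le_one
      simpa using ENNReal.toReal_mono (by simp) this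
    have h2 : tail μ x₀ ≤ tail μ z := Tanti hz
    calc (P s).toReal ≤ 1 := h1
      _ ≤ c₀ * tail μ z := by
          rw [hc₀_def, div_mul_eq_mul_div, one_mul, le_div_iff₀ (Tpos x₀)]
          linarith
  -- Main claim
  have main : ∀ n, ∀ z : ℝ, (P {ω | z < ∑ k ∈ Finset.range n, X k ω}).toReal
      ≤ A n * tail μ z := by
    intro n
    induction n with
    | zero =>
      intro z
      rcases le_or_gt z x₀ with hz | hz
      · exact le_trans (trivial_bound _ z hz) (by rw [hA0])
      · have hz0 : 0 ≤ z := le_trans (le_max_right x₁ 0) (le_of_lt hz)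
        have : {ω : Ω | z < ∑ k ∈ Finset.range 0, X k ω} = ∅ := by
          ext ω; simp; linarith
        rw [this]
        simp only [measure_empty, ENNReal.toReal_zero]
        exact mul_nonneg (le_of_lt (hApos 0)) (Tnn z)
    | succ n ih =>
      intro z
      rcases le_or_gt z x₀ with hz | hz
      · refine le_trans (trivial_bound _ z hz) ?_
        have : c₀ ≤ A (n + 1) := by
          rw [hAsucc]
          have hD3' : c₀ + 3 = D := hD_def.symm
          nlinarith [hApos n]
        exact mul_le_mul_of_nonneg_right this (Tnn z)
      · -- the core estimate for z > x₀
        obtain ⟨hc1, hc2, hc3, hc4, hc5, hc6, hc7⟩ :=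
          hx₁ z (le_trans (le_max_left x₁ 0) (le_of_lt hz))
        have hz0 : (0 : ℝ) < z := lt_of_le_of_lt (le_max_right x₁ 0) hz
        have hhnn : 0 ≤ h z := le_trans zero_le_one hc5
        set Sf : Ω → ℝ := fun ω => ∑ k ∈ Finset.range n, X k ω with hSf_def
        have hSmeas : Measurable Sf := Finset.measurable_sum _ (fun k _ => hXmeas k)
        have hCI : ProbabilityTheory.CondIndepFun G hG Sf (X n) P := by
          have hfun : (∑ j ∈ Finset.range n, X j) = Sf := by
            funext ω; rw [hSf_def]; simp [Finset.sum_apply]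
          have hh := ProbabilityTheory.iCondIndepFun.condIndepFun_sum_range_succ hD1 hXmeas n
          rwa [hfun] at hh
        have IH : ∀ w : ℝ, (P (Sf ⁻¹' Set.Ioi w)).toReal ≤ A n * tail μ w := fun w => ih w
        -- the grid
        set m : ℕ := ⌈z - 2 * h z⌉₊ + 1 with hm_def
        set s : ℕ → ℝ := fun j => min (h z + j) (z - h z) with hs_def
        have hs0 : s 0 = h z := by
          rw [hs_def]; simp only [Nat.cast_zero, add_zero]; exact min_eq_left hc6
        have hsm' : ∀ j : ℕ, m ≤ j → s j = z - h z := by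
          intro j hj
          rw [hs_def]
          refine min_eq_right ?_
          have h1 : z - 2 * h z ≤ (⌈z - 2 * h z⌉₊ : ℝ) := Nat.le_ceil _
          have h2 : (m : ℝ) ≤ j := Nat.cast_le.2 hj
          have h3 : (⌈z - 2 * h z⌉₊ : ℝ) + 1 = (m : ℝ) := by rw [hm_def]; push_cast; ring
          linarith
        have hsmono : Monotone s := fun i j hij =>
          min_le_min (add_le_add_right (Nat.cast_le.2 hij) _) le_rfl
        have hs_ge : ∀ j, h z ≤ s j := fun j =>
          le_min (by linarith [Nat.cast_nonneg (α := ℝ) j]) hc6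
        have hs_le : ∀ j, s j ≤ z - h z := fun j => min_le_right _ _
        have hs_step : ∀ j : ℕ, s (j + 1) ≤ s j + 1 := by
          intro j
          have e1 : s (j + 1) = min (h z + j + 1) (z - h z) := by
            rw [hs_def]; push_cast; ring_nf
          have e2 : min (h z + j + 1) (z - h z) ≤ min (h z + j + 1) (z - h z + 1) :=
            min_le_min le_rfl (by linarith)
          have e3 : min (h z + ↑j + 1) (z - h z + 1) = min (h z + j) (z - h z) + 1 :=
            min_add_add_right _ _ _
          rw [e1]; rw [hs_def]; exact le_trans e2 (le_of_eq e3)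
        -- events
        set T1 : Set Ω := Sf ⁻¹' Set.Ioi (z - h z) with hT1_def
        set T2 : Set Ω := X n ⁻¹' Set.Ioi (z - h z) with hT2_def
        set Bev : Set Ω := B n (h z) with hBev_def
        set AC : ℕ → Set Ω := fun j =>
          Sf ⁻¹' Set.Ioc (s j) (s (j + 1)) ∩ X n ⁻¹' Set.Ioi (z - s (j + 1)) ∩ Bev
          with hAC_def
        have hBev_meas : MeasurableSet[G] Bev := hBmeas n (h z)
        -- set identification
        have hset : {ω : Ω | z < ∑ k ∈ Finset.range (n + 1), X k ω}
            = {ω : Ω | z < Sf ω + X n ω} := by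
          ext ω; simp only [Set.mem_setOf_eq, Finset.sum_range_succ]; rfl
        -- inclusion
        have hincl : {ω : Ω | z < Sf ω + X n ω} ⊆
            (T1 ∪ T2 ∪ Bevᶜ) ∪ ⋃ j ∈ Finset.range m, AC j := by
          intro ω hω
          simp only [Set.mem_setOf_eq] at hω
          by_cases hT1m : z - h z < Sf ω
          · exact Or.inl (Or.inl (Or.inl hT1m))
          by_cases hT2m : z - h z < X n ω
          · exact Or.inl (Or.inl (Or.inr hT2m))
          by_cases hBevm : ω ∈ Bev
          swap
          · exact Or.inl (Or.inr hBevm)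
          have hS_ub : Sf ω ≤ z - h z := not_lt.1 hT1m
          have hX_ub : X n ω ≤ z - h z := not_lt.1 hT2m
          have h1 : s 0 < Sf ω := by rw [hs0]; linarith
          have h2 : Sf ω ≤ s m := by rw [hsm' m le_rfl]; exact hS_ub
          obtain ⟨j, hjm, hj1, hj2⟩ := exists_grid s (Sf ω) m h1 h2
          refine Or.inr (Set.mem_biUnion (Finset.mem_range.2 hjm) ?_)
          exact ⟨⟨⟨hj1, hj2⟩, by simp only [Set.mem_preimage, Set.mem_Ioi]; linarith⟩, hBevm⟩
        -- measure chain in ℝ≥0∞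
        have hsubE : P {ω : Ω | z < Sf ω + X n ω}
            ≤ P T1 + P T2 + P Bevᶜ + ∑ j ∈ Finset.range m, P (AC j) := by
          calc P {ω : Ω | z < Sf ω + X n ω}
              ≤ P ((T1 ∪ T2 ∪ Bevᶜ) ∪ ⋃ j ∈ Finset.range m, AC j) := measure_mono hincl
            _ ≤ P (T1 ∪ T2 ∪ Bevᶜ) + P (⋃ j ∈ Finset.range m, AC j) := measure_union_le _ _
            _ ≤ (P (T1 ∪ T2) + P Bevᶜ) + P (⋃ j ∈ Finset.range m, AC j) :=
                add_le_add (measure_union_le _ _) le_rfl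
            _ ≤ ((P T1 + P T2) + P Bevᶜ) + P (⋃ j ∈ Finset.range m, AC j) :=
                add_le_add (add_le_add (measure_union_le _ _) le_rfl) le_rfl
            _ ≤ P T1 + P T2 + P Bevᶜ + ∑ j ∈ Finset.range m, P (AC j) :=
                add_le_add le_rfl (measure_biUnion_finset_le _ _)
        have hPreal : (P {ω : Ω | z < Sf ω + X n ω}).toReal
            ≤ (P T1).toReal + (P T2).toReal + (P Bevᶜ).toReal
              + ∑ j ∈ Finset.range m, (P (AC j)).toReal := by
          have hfinS : ∑ j ∈ Finset.range m, P (AC j) ≠ ⊤ :=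
            (ENNReal.sum_lt_top.2 fun j _ => measure_lt_top P _).ne
          have hne : P T1 + P T2 + P Bevᶜ + ∑ j ∈ Finset.range m, P (AC j) ≠ ⊤ := by
            refine ENNReal.add_ne_top.2 ⟨?_, hfinS⟩
            refine ENNReal.add_ne_top.2 ⟨?_, measure_ne_top P _⟩
            exact ENNReal.add_ne_top.2 ⟨measure_ne_top P _, measure_ne_top P _⟩
          have h1 := ENNReal.toReal_mono hne hsubE
          rw [ENNReal.toReal_add (by
              refine ENNReal.add_ne_top.2 ⟨?_, measure_ne_top P _⟩
              exact ENNReal.add_ne_top.2 ⟨measure_ne_top P _, measure_ne_top P _⟩) hfinS,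
            ENNReal.toReal_add (ENNReal.add_ne_top.2
              ⟨measure_ne_top P _, measure_ne_top P _⟩) (measure_ne_top P _),
            ENNReal.toReal_add (measure_ne_top P _) (measure_ne_top P _),
            ENNReal.toReal_sum (fun j _ => measure_ne_top P _)] at h1
          exact h1
        -- term bounds
        have bT1 : (P T1).toReal ≤ A n * ((1 + ε') * tail μ z) := by
          refine le_trans (IH (z - h z)) ?_
          exact mul_le_mul_of_nonneg_left hc1 (hApos n).le
        have bT2 : (P T2).toReal ≤ 2 * tail μ z := by
          have he : (P T2).toReal = tail μ (z - h z) := by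
            rw [hT2_def, tail, ← hdist n, Measure.map_apply (hXmeas n) measurableSet_Ioi]
          rw [he]
          nlinarith [Tnn z, hε'le1, hc1]
        have bB : (P Bevᶜ).toReal ≤ tail μ z := by
          refine le_trans (hc2 n) ?_
          nlinarith [Tnn z, hε'le1, hε'pos]
        -- grid quantities
        set a : ℕ → ℝ := fun j => tail μ (z - s (j + 1)) with ha_def
        set N : ℕ → ℝ := fun j => (P (Sf ⁻¹' Set.Ioi (s j))).toReal with hN_def
        set F : ℕ → ℝ := fun j => tail μ (s j) with hF_def
        have ha0 : 0 ≤ a 0 := Tnn _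
        have hamono : Monotone a := fun i j hij =>
          Tanti (by linarith [hsmono (Nat.succ_le_succ hij)] : z - s (j + 1) ≤ z - s (i + 1))
        have hN0 : ∀ j, 0 ≤ N j := fun j => ENNReal.toReal_nonneg
        have hNF : ∀ j, N j ≤ A n * F j := fun j => IH (s j)
        -- the key conditional-independence bound per grid cell
        have bAC : ∀ j : ℕ, (P (AC j)).toReal ≤ (r z * a j) * (N j - N (j + 1)) := by
          intro j
          have hzsj : h z ≤ z - s (j + 1) := by linarith [hs_le (j + 1)]
          have hsjz : z - s (j + 1) ≤ z := by linarith [hs_ge (j + 1), hhnn]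
          have hbd : ∀ᵐ ω ∂P, ω ∈ Bev →
              (P[Set.indicator (X n ⁻¹' Set.Ioi (z - s (j + 1)))
                (fun _ => (1 : ℝ)) | G]) ω ≤ r z * a j := by
            filter_upwards [hbound n (z - s (j + 1))] with ω hω hmem
            have h1 : ω ∈ B n (z - s (j + 1)) := hBmono n hzsj hmem
            refine le_trans (hω h1) ?_
            exact mul_le_mul_of_nonneg_right (hrmono hsjz) (Tnn _)
          have hkey := key_cond (I := Set.Ioc (s j) (s (j + 1))) hG P hSmeas (hXmeas n)
            hCI measurableSet_Ioc (z - s (j + 1)) (r z * a j)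
            (mul_nonneg (hrnn z) (Tnn (z - s (j + 1)))) hBev_meas hbd
          refine le_trans hkey ?_
          have hdiffeq : (P (Sf ⁻¹' Set.Ioc (s j) (s (j + 1)))).toReal = N j - N (j + 1) := by
            have hIoc : Set.Ioc (s j) (s (j + 1))
                = Set.Ioi (s j) \ Set.Ioi (s (j + 1)) := Set.Ioi_diff_Ioi.symm
            have hsub2 : Sf ⁻¹' Set.Ioi (s (j + 1)) ⊆ Sf ⁻¹' Set.Ioi (s j) :=
              Set.preimage_mono (Set.Ioi_subset_Ioi (hsmono (Nat.le_succ j)))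
            rw [hIoc, Set.preimage_diff,
              measure_diff hsub2 ((hSmeas measurableSet_Ioi).nullMeasurableSet)
                (measure_ne_top P _),
              ENNReal.toReal_sub_of_le (measure_mono hsub2) (measure_ne_top P _)]
          rw [hdiffeq]
        -- integral comparison on the grid
        set J : ℝ := ∫ y in Set.Ioc (h z) (z - h z), tail μ (z - y) ∂μ with hJ_def
        have hgmeas : Measurable (fun y : ℝ => 2 * tail μ (z - y)) :=
          (tail_measurable.comp (measurable_const.sub measurable_id)).const_mul 2
        have hgint : Integrable (fun y : ℝ => 2 * tail μ (z - y)) μ := by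
          refine Integrable.mono' (integrable_const (2 : ℝ)) hgmeas.aestronglyMeasurable ?_
          refine Filter.Eventually.of_forall fun y => ?_
          rw [Real.norm_eq_abs, abs_of_nonneg (by linarith [Tnn (z - y)])]
          have hT1' : tail μ (z - y) ≤ 1 := by
            have hμ1 : μ (Set.Ioi (z - y)) ≤ 1 := prob_le_one
            simpa [tail] using ENNReal.toReal_mono (by simp) hμ1
          linarith
        have hcell : ∀ j : ℕ, a j * (F j - F (j + 1))
            ≤ ∫ y in Set.Ioc (s j) (s (j + 1)), 2 * tail μ (z - y) ∂μ := by
          intro j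
          have hFdiff : F j - F (j + 1) = (μ (Set.Ioc (s j) (s (j + 1)))).toReal :=
            tail_sub_tail (hsmono (Nat.le_succ j))
          have hconst : ∫ y in Set.Ioc (s j) (s (j + 1)), a j ∂μ
              = a j * (F j - F (j + 1)) := by
            rw [setIntegral_const, hFdiff, smul_eq_mul, mul_comm]; rfl
          rw [← hconst]
          refine setIntegral_mono_on (integrableOn_const)
            hgint.integrableOn measurableSet_Ioc ?_
          intro y hy
          have hy1 : s j < y := hy.1
          have hy2 : y ≤ s (j + 1) := hy.2
          have hb1 : tail μ (z - s (j + 1)) ≤ tail μ (z - s j - 1) :=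
            Tanti (by linarith [hs_step j])
          have hb2 : tail μ (z - s j - 1) ≤ 2 * tail μ (z - s j) := by
            have := hz₁ (z - s j) (by linarith [hs_le j, hc7])
            simpa [sub_sub] using this
          have hb3 : tail μ (z - s j) ≤ tail μ (z - y) := Tanti (by linarith)
          simp only [ha_def]
          linarith
        have hgridInt : ∑ j ∈ Finset.range m, a j * (F j - F (j + 1)) ≤ 2 * J := by
          calc ∑ j ∈ Finset.range m, a j * (F j - F (j + 1))
              ≤ ∑ j ∈ Finset.range m, ∫ y in Set.Ioc (s j) (s (j + 1)),
                  2 * tail μ (z - y) ∂μ := Finset.sum_le_sum fun j _ => hcell j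
            _ = ∫ y in Set.Ioc (s 0) (s m), 2 * tail μ (z - y) ∂μ :=
                sum_setIntegral_Ioc μ _ hgint s hsmono m
            _ = 2 * J := by
                rw [hs0, hsm' m le_rfl, hJ_def, integral_const_mul]
        -- assembling the grid bound
        have hAbel := abel_bound' a F N (A n) ha0 hamono hN0 hNF m
        have ham_eq : a m = tail μ (h z) := by
          show tail μ (z - s (m + 1)) = tail μ (h z)
          rw [hsm' (m + 1) (Nat.le_succ m)]
          congr 1; ring
        have hFm_eq : F m = tail μ (z - h z) := by
          show tail μ (s m) = tail μ (z - h z)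
          rw [hsm' m le_rfl]
        have hgrid : ∑ j ∈ Finset.range m, (P (AC j)).toReal
            ≤ 4 * ε' * (A n * tail μ z) := by
          have e1 : ∑ j ∈ Finset.range m, (P (AC j)).toReal
              ≤ r z * ∑ j ∈ Finset.range m, a j * (N j - N (j + 1)) := by
            rw [Finset.mul_sum]
            refine Finset.sum_le_sum fun j _ => ?_
            refine le_trans (bAC j) (le_of_eq ?_)
            ring
          have e2 : r z * ∑ j ∈ Finset.range m, a j * (N j - N (j + 1))
              ≤ r z * (A n * (∑ j ∈ Finset.range m, a j * (F j - F (j + 1)))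
                + A n * (a m * F m)) := mul_le_mul_of_nonneg_left hAbel (hrnn z)
          have e3 : r z * (A n * (∑ j ∈ Finset.range m, a j * (F j - F (j + 1)))
                + A n * (a m * F m))
              ≤ A n * (r z * (2 * J)) + A n * ((r z * tail μ (h z)) * tail μ (z - h z)) := by
            rw [ham_eq, hFm_eq]
            have i1 : r z * ∑ j ∈ Finset.range m, a j * (F j - F (j + 1)) ≤ r z * (2 * J) :=
              mul_le_mul_of_nonneg_left hgridInt (hrnn z)
            have eq1 : r z * (A n * (∑ j ∈ Finset.range m, a j * (F j - F (j + 1)))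
                  + A n * (tail μ (h z) * tail μ (z - h z)))
                = A n * (r z * ∑ j ∈ Finset.range m, a j * (F j - F (j + 1)))
                  + A n * ((r z * tail μ (h z)) * tail μ (z - h z)) := by ring
            rw [eq1]
            exact add_le_add (mul_le_mul_of_nonneg_left i1 (hApos n).le) le_rfl
          have e4 : A n * (r z * (2 * J)) ≤ A n * (2 * (ε' * tail μ z)) := by
            refine mul_le_mul_of_nonneg_left ?_ (hApos n).le
            nlinarith [hc4]
          have e5 : A n * ((r z * tail μ (h z)) * tail μ (z - h z))
              ≤ A n * (ε' * ((1 + ε') * tail μ z)) := by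
            refine mul_le_mul_of_nonneg_left ?_ (hApos n).le
            refine mul_le_mul hc3 hc1 (Tnn _) hε'pos.le
          have e6 : A n * (2 * (ε' * tail μ z)) + A n * (ε' * ((1 + ε') * tail μ z))
              ≤ 4 * ε' * (A n * tail μ z) := by
            have key : 0 ≤ A n * tail μ z * ε' * (1 - ε') :=
              mul_nonneg (mul_nonneg (mul_nonneg (hApos n).le (Tnn z)) hε'pos.le)
                (by linarith)
            nlinarith [key]
          linarith
        -- final assembly
        have hD3' : 3 ≤ D := by rw [hD_def]; linarith
        calc (P {ω : Ω | z < ∑ k ∈ Finset.range (n + 1), X k ω}).toReal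
            = (P {ω : Ω | z < Sf ω + X n ω}).toReal := by rw [hset]
          _ ≤ (P T1).toReal + (P T2).toReal + (P Bevᶜ).toReal
              + ∑ j ∈ Finset.range m, (P (AC j)).toReal := hPreal
          _ ≤ A n * ((1 + ε') * tail μ z) + 2 * tail μ z + tail μ z
              + 4 * ε' * (A n * tail μ z) := by linarith
          _ ≤ A (n + 1) * tail μ z := by
              rw [hAsucc]
              have k1 : 0 ≤ A n * tail μ z * (ε - 5 * ε') :=
                mul_nonneg (mul_nonneg (hApos n).le (Tnn z)) (by linarith)
              have k2 : 0 ≤ (D - 3) * tail μ z := mul_nonneg (by linarith) (Tnn z)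
              nlinarith [k1, k2]
  -- conclusion
  have hDpos : 0 < D := by rw [hD_def]; linarith
  refine ⟨c₀ + D / ε, by positivity, x₀, ?_⟩
  intro x hx n _
  have hAle : ∀ n, A n ≤ (c₀ + D / ε) * (1 + ε) ^ n - D / ε := by
    intro n
    induction n with
    | zero => simp [hA0]
    | succ n ih =>
      rw [hAsucc, pow_succ]
      have h1 : (1 + ε) * A n ≤ (1 + ε) * ((c₀ + D / ε) * (1 + ε) ^ n - D / ε) :=
        mul_le_mul_of_nonneg_left ih (by linarith)
      have h2 : (1 + ε) * (D / ε) = D / ε + D := by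
        field_simp
      calc (1 + ε) * A n + D ≤ (1 + ε) * ((c₀ + D / ε) * (1 + ε) ^ n - D / ε) + D := by linarith
        _ = (c₀ + D / ε) * ((1 + ε) ^ n * (1 + ε)) - D / ε := by rw [mul_sub]; linarith [h2]
        _ = (c₀ + D / ε) * ((1 + ε) ^ n * (1 + ε)) - D / ε := rfl
  calc (P {ω | x < ∑ k ∈ Finset.range n, X k ω}).toReal ≤ A n * tail μ x := main n x
    _ ≤ ((c₀ + D / ε) * (1 + ε) ^ n - D / ε) * tail μ x :=
        mul_le_mul_of_nonneg_right (hAle n) (Tnn x)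
    _ ≤ (c₀ + D / ε) * (1 + ε) ^ n * tail μ x := by
        have : D / ε ≥ 0 := by positivity
        nlinarith [Tnn x]
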